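/- (Monotonicity of indirect scores under a single raised score) Let A be a finite set, v a nonnegative score matrix, and ṽ obtained from v by increasing only the entry for the pair (a,b): ṽ_{ab} > v_{ab} and ṽ_{xy} = v_{xy} for all (x,y) ≠ (a,b). Then: (i) ṽ*_{xy} ≥ v*_{xy} for all distinct x,y; (ii) ṽ*_{xa} = v*_{xa} for all x ≠ a; (iii) ṽ*_{by} = v*_{by} for all y ≠ b. -/

import Mathlib

/-- The score of a path (a list of vertices): the minimum of the scores
of its consecutive links. -/
def pathScore {A : Type*} (v : A → A → ℝ) : List A → ℝ
  | [] => 0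
  | [_] => 0
  | [a, b] => v a b
  | a :: b :: c :: l => min (v a b) (pathScore v (b :: c :: l))

/-- `l` is a path from `x` to `y`: a list with at least two entries,
starting at `x` and ending at `y`. -/
def IsPath {A : Type*} (x y : A) (l : List A) : Prop :=
  2 ≤ l.length ∧ l.head? = some x ∧ l.getLast? = some y

/-- The max-min indirect score `v*_{xy}`: the supremum (attained, since the
set of path scores is finite) of path scores over all paths from `x` to `y`. -/
noncomputable def indirectScore {A : Type*} (v : A → A → ℝ) (x y : A) : ℝ :=
  ⨆ l : {l : List A // IsPath x y l}, pathScore v l.1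

namespace Stmt19Aux

variable {A : Type*}

/-- Characterization of consecutive pairs (edges) of a list. -/
lemma mem_edges_iff (p q : A) : ∀ l : List A,
    ((p, q) ∈ l.zip l.tail ↔ ∃ s t, l = s ++ p :: q :: t)
  | [] => by
    simp only [List.zip_nil_left, List.not_mem_nil, false_iff, not_exists]
    rintro s t h
    apply_fun List.length at h
    simp at h
  | [a] => by
    constructor
    · simp
    · rintro ⟨s, t, h⟩
      apply_fun List.length at h
      simp at h
      omega
  | a :: b :: m => by
    have ih := mem_edges_iff p q (b :: m)
    simp only [List.tail_cons, List.zip_cons_cons, List.mem_cons] at *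
    constructor
    · rintro (h | h)
      · obtain ⟨rfl, rfl⟩ := Prod.mk.inj h
        exact ⟨[], m, rfl⟩
      · obtain ⟨s, t, hst⟩ := ih.mp h
        exact ⟨a :: s, t, by simp [hst]⟩
    · rintro ⟨s, t, hst⟩
      cases s with
      | nil =>
        simp only [List.nil_append, List.cons.injEq] at hst
        obtain ⟨rfl, rfl, _⟩ := hst
        left; rfl
      | cons c s' =>
        simp only [List.cons_append, List.cons.injEq] at hst
        obtain ⟨rfl, hst⟩ := hst
        right
        exact ih.mpr ⟨s', t, hst⟩

/-- The path score is at most each of its edge scores. -/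
lemma pathScore_le_edge (v : A → A → ℝ) (p q : A) : ∀ l : List A,
    (p, q) ∈ l.zip l.tail → pathScore v l ≤ v p q
  | [], h => by simp at h
  | [a], h => by simp at h
  | [a, b], h => by
    simp only [List.tail_cons, List.zip_cons_cons, List.zip_nil_right,
      List.mem_singleton, Prod.mk.injEq] at h
    obtain ⟨rfl, rfl⟩ := h
    simp [pathScore]
  | a :: b :: c :: m, h => by
    simp only [List.tail_cons, List.zip_cons_cons, List.mem_cons, Prod.mk.injEq] at h
    rcases h with ⟨rfl, rfl⟩ | h
    · exact min_le_left _ _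
    · refine le_trans (min_le_right _ _) ?_
      exact pathScore_le_edge v p q (b :: c :: m) (by simpa using h)

/-- A lower bound on all edge scores is a lower bound on the path score. -/
lemma le_pathScore (v : A → A → ℝ) (c : ℝ) : ∀ l : List A, 2 ≤ l.length →
    (∀ p q : A, (p, q) ∈ l.zip l.tail → c ≤ v p q) → c ≤ pathScore v l
  | [], h2, _ => by simp at h2
  | [a], h2, _ => by simp at h2
  | [a, b], _, h => by
    have := h a b (by simp)
    simpa [pathScore] using this
  | a :: b :: d :: m, _, h => by
    refine le_min (h a b (by simp)) ?_
    refine le_pathScore v c (b :: d :: m) (by simp) ?_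
    intro p q hpq
    exact h p q (by simp only [List.tail_cons, List.zip_cons_cons, List.mem_cons]; right; exact (by simpa using hpq))

lemma pathScore_mono {v w : A → A → ℝ} (h : ∀ x y, v x y ≤ w x y) :
    ∀ l : List A, pathScore v l ≤ pathScore w l
  | [] => le_refl _
  | [a] => le_refl _
  | [a, b] => h a b
  | a :: b :: c :: m =>
    min_le_min (h a b) (pathScore_mono h (b :: c :: m))

lemma pathScore_le_bound [Fintype A] [Nonempty A] (v : A → A → ℝ) :
    ∀ l : List A, pathScore v l ≤
      max 0 ((Finset.univ : Finset (A × A)).sup' Finset.univ_nonempty fun p => v p.1 p.2)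
  | [] => le_max_left _ _
  | [a] => le_max_left _ _
  | [a, b] => le_trans (Finset.le_sup' (f := fun p : A × A => v p.1 p.2) (b := (a, b)) (by simp)) (le_max_right _ _)
  | a :: b :: c :: m =>
    le_trans (min_le_right _ _) (pathScore_le_bound v (b :: c :: m))

lemma bddAbove_range [Fintype A] (v : A → A → ℝ) (x y : A) :
    BddAbove (Set.range fun l : {l : List A // IsPath x y l} => pathScore v l.1) := by
  haveI : Nonempty A := ⟨x⟩
  refine ⟨max 0 ((Finset.univ : Finset (A × A)).sup' Finset.univ_nonempty fun p => v p.1 p.2), ?_⟩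
  rintro r ⟨l, rfl⟩
  exact pathScore_le_bound v l.1

lemma isPath_pair (x y : A) : IsPath x y [x, y] := by
  refine ⟨by simp, by simp, by simp⟩

instance nonempty_path (x y : A) : Nonempty {l : List A // IsPath x y l} :=
  ⟨⟨[x, y], isPath_pair x y⟩⟩

/-- Edges of the reversed list are the swapped edges. -/
lemma mem_edges_reverse (p q : A) (l : List A) :
    (p, q) ∈ l.reverse.zip l.reverse.tail ↔ (q, p) ∈ l.zip l.tail := by
  rw [mem_edges_iff, mem_edges_iff]
  constructor
  · rintro ⟨s, t, h⟩
    refine ⟨t.reverse, s.reverse, ?_⟩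
    have : l.reverse.reverse = (s ++ p :: q :: t).reverse := by rw [h]
    simpa using this
  · rintro ⟨s, t, h⟩
    exact ⟨t.reverse, s.reverse, by simp [h]⟩

lemma pathScore_le_swap_reverse (v : A → A → ℝ) (l : List A) (h2 : 2 ≤ l.length) :
    pathScore v l ≤ pathScore (Function.swap v) l.reverse := by
  refine le_pathScore _ _ _ (by simpa using h2) ?_
  intro p q hpq
  rw [mem_edges_reverse] at hpq
  exact pathScore_le_edge v q p l hpq

lemma pathScore_swap_reverse (v : A → A → ℝ) (l : List A) (h2 : 2 ≤ l.length) :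
    pathScore (Function.swap v) l.reverse = pathScore v l := by
  refine le_antisymm ?_ (pathScore_le_swap_reverse v l h2)
  have := pathScore_le_swap_reverse (Function.swap v) l.reverse (by simpa using h2)
  simpa [Function.swap] using this

lemma isPath_reverse {x y : A} {l : List A} (h : IsPath x y l) : IsPath y x l.reverse := by
  obtain ⟨h2, hh, hl⟩ := h
  refine ⟨by simpa using h2, ?_, ?_⟩
  · rwa [List.head?_reverse]
  · rwa [List.getLast?_reverse]

lemma indirectScore_swap [Fintype A] (v : A → A → ℝ) (x y : A) :
    indirectScore (Function.swap v) y x = indirectScore v x y := by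
  unfold indirectScore
  apply le_antisymm
  · refine ciSup_le fun l => ?_
    have h2 : 2 ≤ l.1.length := l.2.1
    calc pathScore (Function.swap v) l.1
        ≤ pathScore (Function.swap (Function.swap v)) l.1.reverse :=
          pathScore_le_swap_reverse _ _ h2
      _ = pathScore v l.1.reverse := by rfl
      _ ≤ _ := le_ciSup (bddAbove_range v x y) ⟨l.1.reverse, isPath_reverse l.2⟩
  · refine ciSup_le fun l => ?_
    have h2 : 2 ≤ l.1.length := l.2.1
    calc pathScore v l.1
        ≤ pathScore (Function.swap v) l.1.reverse := pathScore_le_swap_reverse _ _ h2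
      _ ≤ _ := le_ciSup (bddAbove_range (Function.swap v) y x)
          ⟨l.1.reverse, isPath_reverse l.2⟩

lemma edge_fst_mem_dropLast (p q : A) : ∀ l : List A,
    (p, q) ∈ l.zip l.tail → p ∈ l.dropLast
  | [], h => by simp at h
  | [a], h => by simp at h
  | a :: b :: m, h => by
    simp only [List.tail_cons, List.zip_cons_cons, List.mem_cons, Prod.mk.injEq] at h
    have hdl : (a :: b :: m).dropLast = a :: (b :: m).dropLast := by
      simp [List.dropLast_cons_of_ne_nil]
    rcases h with ⟨rfl, rfl⟩ | h
    · rw [hdl]; exact List.mem_cons_self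
    · rw [hdl]
      exact List.mem_cons_of_mem _ (edge_fst_mem_dropLast p q (b :: m) (by simpa using h))

lemma mem_of_getLast?' {a : A} {l : List A} (h : l.getLast? = some a) : a ∈ l := by
  cases l with
  | nil => simp at h
  | cons c t =>
    rw [List.getLast?_eq_getLast (by simp)] at h
    rw [← Option.some_inj.mp h]
    exact List.getLast_mem _

lemma takeWhile_spec [DecidableEq A] (a : A) : ∀ l : List A, a ∈ l →
    ∃ r, l = l.takeWhile (fun c => c ≠ a) ++ a :: r
  | [], h => by simp at h
  | c :: t, h => by
    by_cases hc : c = a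
    · subst hc
      refine ⟨t, ?_⟩
      simp [List.takeWhile_cons]
    · have ha : a ∈ t := by
        rcases List.mem_cons.mp h with rfl | h
        · exact absurd rfl hc
        · exact h
      obtain ⟨r, hr⟩ := takeWhile_spec a t ha
      refine ⟨r, ?_⟩
      rw [List.takeWhile_cons]
      simp only [hc, decide_not, decide_eq_true_eq]
      rw [if_pos (by simp [hc])]
      simpa using hr

/-- Key lemma: raising the score of the single link `(a,b)` does not change
indirect scores into `a`. -/
lemma key [Fintype A] (v vt : A → A → ℝ) (a b : A)
    (hraise : v a b ≤ vt a b)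
    (hsame : ∀ x y : A, (x, y) ≠ (a, b) → vt x y = v x y)
    (x : A) (hx : x ≠ a) :
    indirectScore vt x a = indirectScore v x a := by
  classical
  have hle : ∀ p q, v p q ≤ vt p q := by
    intro p q
    by_cases h : (p, q) = (a, b)
    · obtain ⟨rfl, rfl⟩ := Prod.mk.inj h
      exact hraise
    · exact (hsame p q h).ge
  apply le_antisymm
  · -- ≤ : any vt-path is dominated by a v-path avoiding the link (a,b)
    refine ciSup_le fun L => ?_
    obtain ⟨l, hl⟩ := L
    obtain ⟨h2, hh, hlast⟩ := hl
    -- l = x :: r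
    obtain ⟨r, rfl⟩ : ∃ r, l = x :: r := by
      cases l with
      | nil => simp at hh
      | cons c r => exact ⟨r, by simpa using (by simpa using hh : c = x) ▸ rfl⟩
    have hmem : a ∈ x :: r := mem_of_getLast?' hlast
    obtain ⟨rr, hrr⟩ := takeWhile_spec a (x :: r) hmem
    set s := (x :: r).takeWhile (fun c => c ≠ a) with hs
    have hsne : s = x :: r.takeWhile (fun c => c ≠ a) := by
      simp [hs, List.takeWhile_cons, hx]
    set l' := s ++ [a] with hl'
    have hpath : IsPath x a l' := by
      refine ⟨?_, ?_, ?_⟩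
      · rw [hl', hsne]; simp
      · rw [hl', hsne]; simp
      · rw [hl']; simp
    have hedge : ∀ p q : A, (p, q) ∈ l'.zip l'.tail → pathScore vt (x :: r) ≤ v p q := by
      intro p q hpq
      -- p is in s, hence p ≠ a
      have hps : p ∈ s := by
        have := edge_fst_mem_dropLast p q l' hpq
        rwa [hl', List.dropLast_concat] at this
      have hpa : p ≠ a := by
        have := List.mem_takeWhile_imp (hs ▸ hps)
        simpa using this
      -- the edge (p,q) is also an edge of the full path
      have hfull : (p, q) ∈ (x :: r).zip (x :: r).tail := by
        rw [mem_edges_iff] at hpq ⊢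
        obtain ⟨s', t', hst⟩ := hpq
        refine ⟨s', t' ++ rr, ?_⟩
        calc x :: r = l' ++ rr := by
              rw [hl', hrr]; simp
          _ = s' ++ p :: q :: (t' ++ rr) := by rw [hst]; simp
      have h1 : pathScore vt (x :: r) ≤ vt p q := pathScore_le_edge vt p q _ hfull
      rwa [hsame p q (by simp [hpa])] at h1
    calc pathScore vt (x :: r)
        ≤ pathScore v l' := le_pathScore v _ l' hpath.1 hedge
      _ ≤ _ := le_ciSup (bddAbove_range v x a) ⟨l', hpath⟩
  · refine ciSup_le fun l => ?_
    exact le_trans (pathScore_mono hle l.1) (le_ciSup (bddAbove_range vt x a) l)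

end Stmt19Aux

open Stmt19Aux in
/-- Monotonicity of indirect scores under a single raised score. -/
theorem stmt19 {A : Type*} [Fintype A] (v vt : A → A → ℝ)
    (hv : ∀ x y : A, 0 ≤ v x y)
    (a b : A) (hab : a ≠ b)
    (hraise : v a b < vt a b)
    (hsame : ∀ x y : A, (x, y) ≠ (a, b) → vt x y = v x y) :
    (∀ x y : A, x ≠ y → indirectScore v x y ≤ indirectScore vt x y) ∧
    (∀ x : A, x ≠ a → indirectScore vt x a = indirectScore v x a) ∧
    (∀ y : A, y ≠ b → indirectScore vt b y = indirectScore v b y) := by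
  classical
  have hle : ∀ p q, v p q ≤ vt p q := by
    intro p q
    by_cases h : (p, q) = (a, b)
    · obtain ⟨rfl, rfl⟩ := Prod.mk.inj h
      exact hraise.le
    · exact (hsame p q h).ge
  refine ⟨?_, ?_, ?_⟩
  · intro x y _
    exact ciSup_le fun l =>
      le_trans (pathScore_mono hle l.1) (le_ciSup (bddAbove_range vt x y) l)
  · intro x hx
    exact key v vt a b hraise.le hsame x hx
  · intro y hy
    have h1 : indirectScore (Function.swap vt) y b = indirectScore (Function.swap v) y b := by
      refine key (Function.swap v) (Function.swap vt) b a ?_ ?_ y hy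
      · exact hraise.le
      · intro p q hpq
        exact hsame q p (by simp only [ne_eq, Prod.mk.injEq, not_and] at hpq ⊢; tauto)
    rw [← indirectScore_swap vt b y, ← indirectScore_swap v b y, h1]
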